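/- Let (D_n) be an increasing sequence of positive definite N × N Hermitian matrices (D_{n+1} ≥ D_n), and suppose the sequences D_n^{-1/2} A_n D_n^{-1/2}, D_n^{-1/2} B_n D_n^{-1/2}, D_n^{-1/2} C_n D_n^{-1/2} converge. Then for n ≤ k, the matrices D_k^{-1/2} A_n D_k^{-1/2}, D_k^{-1/2} B_n D_k^{-1/2}, D_k^{-1/2} C_n D_k^{-1/2} are uniformly bounded in operator norm (by a constant independent of n and k). -/

import Mathlib

open Filter
open scoped ComplexOrder Topology

namespace Matrix.PosSemidef

/-- The positive semidefinite square root of a positive semidefinite matrix (the definition of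
`Matrix.PosSemidef.sqrt` in older Mathlib, which has since been removed). -/
noncomputable def sqrt {n : Type*} [Fintype n] [DecidableEq n] {𝕜 : Type*} [RCLike 𝕜]
    {A : Matrix n n 𝕜} (hA : A.PosSemidef) : Matrix n n 𝕜 :=
  (hA.isHermitian.eigenvectorUnitary : Matrix n n 𝕜) *
    Matrix.diagonal ((↑) ∘ (√·) ∘ hA.isHermitian.eigenvalues) *
    (star (hA.isHermitian.eigenvectorUnitary : Matrix n n 𝕜))

lemma posSemidef_sqrt {n : Type*} [Fintype n] [DecidableEq n]
    {A : Matrix n n ℂ} (hA : A.PosSemidef) : hA.sqrt.PosSemidef := by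
  unfold Matrix.PosSemidef.sqrt
  rw [Matrix.star_eq_conjTranspose]
  refine (PosSemidef.diagonal fun i => ?_).mul_mul_conjTranspose_same _
  simp only [Function.comp_apply, Pi.zero_apply]
  exact RCLike.ofReal_nonneg.mpr (Real.sqrt_nonneg _)

lemma sqrt_mul_self {n : Type*} [Fintype n] [DecidableEq n]
    {A : Matrix n n ℂ} (hA : A.PosSemidef) : hA.sqrt * hA.sqrt = A := by
  unfold Matrix.PosSemidef.sqrt
  conv_rhs => rw [hA.isHermitian.spectral_theorem, Unitary.conjStarAlgAut_apply]
  have hU : star (hA.isHermitian.eigenvectorUnitary : Matrix n n ℂ) *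
      (hA.isHermitian.eigenvectorUnitary : Matrix n n ℂ) = 1 := Unitary.coe_star_mul_self _
  have hd : diagonal ((RCLike.ofReal : ℝ → ℂ) ∘ (√·) ∘ hA.isHermitian.eigenvalues) *
      diagonal ((RCLike.ofReal : ℝ → ℂ) ∘ (√·) ∘ hA.isHermitian.eigenvalues) =
      diagonal (RCLike.ofReal ∘ hA.isHermitian.eigenvalues : n → ℂ) := by
    rw [diagonal_mul_diagonal]
    congr 1; funext i
    simp only [Function.comp_apply]
    rw [← RCLike.ofReal_mul, Real.mul_self_sqrt (hA.eigenvalues_nonneg i)]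
  calc _ = (hA.isHermitian.eigenvectorUnitary : Matrix n n ℂ) *
      (diagonal ((RCLike.ofReal : ℝ → ℂ) ∘ (√·) ∘ hA.isHermitian.eigenvalues) *
      (star (hA.isHermitian.eigenvectorUnitary : Matrix n n ℂ) *
      (hA.isHermitian.eigenvectorUnitary : Matrix n n ℂ)) *
      diagonal ((RCLike.ofReal : ℝ → ℂ) ∘ (√·) ∘ hA.isHermitian.eigenvalues)) *
      star (hA.isHermitian.eigenvectorUnitary : Matrix n n ℂ) := by
        simp only [Matrix.mul_assoc]
    _ = _ := by rw [hU, Matrix.mul_one, hd, Matrix.mul_assoc]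

end Matrix.PosSemidef


namespace Stmt8Aux
open Matrix

variable {N : ℕ}

lemma inner_eq {M : Matrix (Fin N) (Fin N) ℂ} (x : EuclideanSpace ℂ (Fin N)) :
    (inner ℂ x (Matrix.toEuclideanCLM (𝕜 := ℂ) M x) : ℂ) =
      dotProduct (star (WithLp.equiv 2 _ x)) (M.mulVec (WithLp.equiv 2 _ x)) := by
  rw [EuclideanSpace.inner_eq_star_dotProduct, dotProduct_comm]
  rfl

lemma inner_re_nonneg {M : Matrix (Fin N) (Fin N) ℂ} (hM : M.PosSemidef)
    (x : EuclideanSpace ℂ (Fin N)) :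
    0 ≤ (inner ℂ x (Matrix.toEuclideanCLM (𝕜 := ℂ) M x) : ℂ).re := by
  rw [inner_eq]
  exact hM.re_dotProduct_nonneg (WithLp.equiv 2 _ x)

end Stmt8Aux

namespace Stmt8Aux
open Matrix

lemma norm_le_one {P : Matrix (Fin N) (Fin N) ℂ} (hP : P.PosSemidef)
    (h1 : (1 - P).PosSemidef) : ‖Matrix.toEuclideanCLM (𝕜 := ℂ) P‖ ≤ 1 := by
  refine ContinuousLinearMap.opNorm_le_bound _ zero_le_one fun x => ?_
  rw [one_mul]
  set φ := Matrix.toEuclideanCLM (𝕜 := ℂ) (n := Fin N) with hφ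
  have hsq : (P - P * P).PosSemidef := by
    have h := h1.mul_mul_conjTranspose_same hP.sqrt
    rw [hP.posSemidef_sqrt.1] at h
    have e : ∀ R : Matrix (Fin N) (Fin N) ℂ, R * R = P → R * (1 - P) * R = P - P * P := by
      rintro R rfl
      noncomm_ring
    rwa [e hP.sqrt hP.sqrt_mul_self] at h
  have hsa : star (φ P) = φ P := by
    rw [← map_star, Matrix.star_eq_conjTranspose, hP.1]
  have e2 : (inner ℂ (φ P x) (φ P x) : ℂ) = inner ℂ x (φ (P * P) x) := by
    rw [_root_.map_mul]
    calc (inner ℂ (φ P x) (φ P x) : ℂ)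
        = inner ℂ x (ContinuousLinearMap.adjoint (φ P) (φ P x)) :=
          (ContinuousLinearMap.adjoint_inner_right _ _ _).symm
      _ = inner ℂ x ((φ P * φ P) x) := by
          rw [← ContinuousLinearMap.star_eq_adjoint, hsa]; rfl
  have i1 : (inner ℂ x (φ (P * P) x) : ℂ).re ≤ (inner ℂ x (φ P x) : ℂ).re := by
    have h := inner_re_nonneg hsq x
    rw [map_sub, ContinuousLinearMap.sub_apply, inner_sub_right] at h
    simp only [Complex.sub_re] at h
    linarith
  have i2 : (inner ℂ x (φ P x) : ℂ).re ≤ ‖x‖ ^ 2 := by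
    have h := inner_re_nonneg h1 x
    rw [map_sub, _root_.map_one, ContinuousLinearMap.sub_apply, ContinuousLinearMap.one_apply,
      inner_sub_right] at h
    simp only [Complex.sub_re] at h
    have hx : (inner ℂ x x : ℂ).re = ‖x‖ ^ 2 := by
      simpa using inner_self_eq_norm_sq (𝕜 := ℂ) x
    linarith
  have key : ‖φ P x‖ ^ 2 ≤ ‖x‖ ^ 2 := by
    have e1 : ‖φ P x‖ ^ 2 = (inner ℂ (φ P x) (φ P x) : ℂ).re := by
      simpa using (inner_self_eq_norm_sq (𝕜 := ℂ) (φ P x)).symm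
    rw [e1, e2]
    exact le_trans i1 i2
  exact (pow_le_pow_iff_left₀ (norm_nonneg _) (norm_nonneg _) two_ne_zero).mp key

end Stmt8Aux

namespace Stmt8Aux
open Matrix

lemma sqrt_isUnit_det {M : Matrix (Fin N) (Fin N) ℂ} (hM : M.PosDef) :
    IsUnit hM.posSemidef.sqrt.det := by
  have h : hM.posSemidef.sqrt.det * hM.posSemidef.sqrt.det = M.det := by
    rw [← Matrix.det_mul, hM.posSemidef.sqrt_mul_self]
  have hMdet : M.det ≠ 0 := by
    have := hM.isUnit
    rw [Matrix.isUnit_iff_isUnit_det, isUnit_iff_ne_zero] at this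
    exact this
  refine isUnit_iff_ne_zero.mpr fun h0 => hMdet ?_
  rw [← h, h0, mul_zero]

lemma sqrt_mul_inv {M : Matrix (Fin N) (Fin N) ℂ} (hM : M.PosDef) :
    hM.posSemidef.sqrt * (hM.posSemidef.sqrt)⁻¹ = 1 :=
  Matrix.mul_nonsing_inv _ (sqrt_isUnit_det hM)

lemma inv_mul_sqrt {M : Matrix (Fin N) (Fin N) ℂ} (hM : M.PosDef) :
    (hM.posSemidef.sqrt)⁻¹ * hM.posSemidef.sqrt = 1 :=
  Matrix.nonsing_inv_mul _ (sqrt_isUnit_det hM)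

lemma inv_sqrt_herm {M : Matrix (Fin N) (Fin N) ℂ} (hM : M.PosDef) :
    ((hM.posSemidef.sqrt)⁻¹)ᴴ = (hM.posSemidef.sqrt)⁻¹ := by
  rw [Matrix.conjTranspose_nonsing_inv, hM.posSemidef.posSemidef_sqrt.1]

end Stmt8Aux


open Stmt8Aux Matrix

set_option maxHeartbeats 1000000 in
set_option synthInstance.maxHeartbeats 400000 in
/-- If `(Dₙ)` is an increasing sequence of positive definite matrices and the scaled
recurrence coefficients `Dₙ^{-1/2} Aₙ Dₙ^{-1/2}`, `Dₙ^{-1/2} Bₙ Dₙ^{-1/2}`,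
`Dₙ^{-1/2} Cₙ Dₙ^{-1/2}` converge, then for `n ≤ k` the matrices
`D_k^{-1/2} Aₙ D_k^{-1/2}`, `D_k^{-1/2} Bₙ D_k^{-1/2}`, `D_k^{-1/2} Cₙ D_k^{-1/2}` are
uniformly bounded in operator norm, by a constant independent of `n` and `k`. -/
theorem stmt8 (N : ℕ) (A B C D : ℕ → Matrix (Fin N) (Fin N) ℂ)
    (hD : ∀ n, (D n).PosDef)
    (hmono : ∀ n, (D (n + 1) - D n).PosSemidef)
    (A' B' C' : Matrix (Fin N) (Fin N) ℂ)
    (hA : Tendsto (fun n =>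
      ((hD n).posSemidef.sqrt)⁻¹ * A n * ((hD n).posSemidef.sqrt)⁻¹) atTop (𝓝 A'))
    (hB : Tendsto (fun n =>
      ((hD n).posSemidef.sqrt)⁻¹ * B n * ((hD n).posSemidef.sqrt)⁻¹) atTop (𝓝 B'))
    (hC : Tendsto (fun n =>
      ((hD n).posSemidef.sqrt)⁻¹ * C n * ((hD n).posSemidef.sqrt)⁻¹) atTop (𝓝 C')) :
    ∃ K : ℝ, ∀ n k, n ≤ k →
      ‖Matrix.toEuclideanCLM (𝕜 := ℂ)
        (((hD k).posSemidef.sqrt)⁻¹ * A n * ((hD k).posSemidef.sqrt)⁻¹)‖ ≤ K ∧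
      ‖Matrix.toEuclideanCLM (𝕜 := ℂ)
        (((hD k).posSemidef.sqrt)⁻¹ * B n * ((hD k).posSemidef.sqrt)⁻¹)‖ ≤ K ∧
      ‖Matrix.toEuclideanCLM (𝕜 := ℂ)
        (((hD k).posSemidef.sqrt)⁻¹ * C n * ((hD k).posSemidef.sqrt)⁻¹)‖ ≤ K := by
  set φ := Matrix.toEuclideanCLM (𝕜 := ℂ) (n := Fin N) with hφdef
  set s : ℕ → Matrix (Fin N) (Fin N) ℂ := fun m => ((hD m).posSemidef.sqrt)⁻¹ with hsdef
  set q : ℕ → Matrix (Fin N) (Fin N) ℂ := fun m => (hD m).posSemidef.sqrt with hqdef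
  -- monotonicity
  have hle : ∀ n k, n ≤ k → (D k - D n).PosSemidef := by
    intro n k hnk
    induction k, hnk using Nat.le_induction with
    | base => simpa using Matrix.PosSemidef.zero
    | succ m hm ih =>
      have := (hmono m).add ih
      simpa [sub_add_sub_cancel] using this
  -- norm of the transfer matrices is at most one
  have hT1 : ∀ n k, n ≤ k → ‖φ (s k * q n)‖ ≤ 1 := by
    intro n k hnk
    have hP : (s k * D n * s k).PosSemidef := by
      have := (hD n).posSemidef.mul_mul_conjTranspose_same (s k)
      rwa [inv_sqrt_herm (hD k)] at this
    have hskDk : s k * D k * s k = 1 := by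
      conv_lhs => rw [show D k = q k * q k from ((hD k).posSemidef.sqrt_mul_self).symm]
      calc s k * (q k * q k) * s k = (s k * q k) * (q k * s k) := by
            simp only [Matrix.mul_assoc]
        _ = 1 := by rw [inv_mul_sqrt (hD k), sqrt_mul_inv (hD k), one_mul]
    have h1P : (1 - s k * D n * s k).PosSemidef := by
      have h := (hle n k hnk).mul_mul_conjTranspose_same (s k)
      rw [inv_sqrt_herm (hD k)] at h
      have e : s k * (D k - D n) * s k = 1 - s k * D n * s k := by
        rw [Matrix.mul_sub, Matrix.sub_mul, ← hskDk]
      rwa [e] at h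
    have hTT : (s k * q n) * (s k * q n)ᴴ = s k * D n * s k := by
      rw [Matrix.conjTranspose_mul, inv_sqrt_herm (hD k), (hD n).posSemidef.posSemidef_sqrt.1]
      calc s k * q n * (q n * s k) = s k * (q n * q n) * s k := by
            simp only [Matrix.mul_assoc]
        _ = s k * D n * s k := by rw [(hD n).posSemidef.sqrt_mul_self]
    have hnorm : ‖φ (s k * q n)‖ * ‖φ (s k * q n)‖ ≤ 1 := by
      have e1 : φ (s k * q n) * star (φ (s k * q n)) = φ (s k * D n * s k) := by
        rw [← map_star, ← _root_.map_mul, Matrix.star_eq_conjTranspose, hTT]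
      have e2 := CStarRing.norm_self_mul_star (x := φ (s k * q n))
      rw [e1] at e2
      rw [← e2]
      exact norm_le_one hP h1P
    nlinarith [norm_nonneg (φ (s k * q n))]
  -- the general bound for a convergent scaled sequence
  have main : ∀ (X : ℕ → Matrix (Fin N) (Fin N) ℂ) (X' : Matrix (Fin N) (Fin N) ℂ),
      Tendsto (fun n => s n * X n * s n) atTop (𝓝 X') →
      ∃ KX : ℝ, ∀ n k, n ≤ k → ‖φ (s k * X n * s k)‖ ≤ KX := by
    intro X X' hX
    -- continuity of the norm of the CLM
    have hcont : Continuous fun M : Matrix (Fin N) (Fin N) ℂ => φ M := by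
      let L : Matrix (Fin N) (Fin N) ℂ →ₗ[ℂ]
          (EuclideanSpace ℂ (Fin N) →L[ℂ] EuclideanSpace ℂ (Fin N)) :=
        { toFun := fun M => φ M,
          map_add' := fun a b => map_add φ a b,
          map_smul' := fun c a => map_smul φ c a }
      exact L.continuous_of_finiteDimensional
    have htend : Tendsto (fun n => ‖φ (s n * X n * s n)‖) atTop (𝓝 ‖φ X'‖) :=
      ((hcont.tendsto X').comp hX).norm
    obtain ⟨KX, hKX⟩ := htend.bddAbove_range
    refine ⟨KX, fun n k hnk => ?_⟩
    have hKn : ∀ m, ‖φ (s m * X m * s m)‖ ≤ KX := fun m =>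
      hKX (Set.mem_range_self m)
    -- factorization
    have hfac : s k * X n * s k = (s k * q n) * (s n * X n * s n) * (s k * q n)ᴴ := by
      rw [Matrix.conjTranspose_mul, inv_sqrt_herm (hD k), (hD n).posSemidef.posSemidef_sqrt.1]
      have e1 : ∀ Z : Matrix (Fin N) (Fin N) ℂ, q n * (s n * Z) = Z := fun Z => by
        rw [← Matrix.mul_assoc, sqrt_mul_inv (hD n), one_mul]
      have e2 : ∀ Z : Matrix (Fin N) (Fin N) ℂ, s n * (q n * Z) = Z := fun Z => by
        rw [← Matrix.mul_assoc, inv_mul_sqrt (hD n), one_mul]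
      simp only [Matrix.mul_assoc, e1, e2]
      exact congrArg (s k * ·) (congrArg (X n * ·) (e2 (s k)).symm)
    have hTs : ‖φ ((s k * q n)ᴴ)‖ = ‖φ (s k * q n)‖ := by
      rw [← Matrix.star_eq_conjTranspose, map_star, ContinuousLinearMap.star_eq_adjoint]
      exact LinearIsometryEquiv.norm_map _ _
    have hXnorm : 0 ≤ ‖φ (s n * X n * s n)‖ := norm_nonneg _
    calc ‖φ (s k * X n * s k)‖
        = ‖φ (s k * q n) * φ (s n * X n * s n) * φ ((s k * q n)ᴴ)‖ := by
          simp only [hfac, _root_.map_mul]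
      _ ≤ ‖φ (s k * q n)‖ * ‖φ (s n * X n * s n)‖ * ‖φ ((s k * q n)ᴴ)‖ :=
          le_trans (norm_mul_le _ _)
            (mul_le_mul_of_nonneg_right (norm_mul_le _ _) (norm_nonneg _))
      _ = (‖φ (s k * q n)‖ * ‖φ (s k * q n)‖) * ‖φ (s n * X n * s n)‖ := by
          rw [hTs]; ring
      _ ≤ 1 * ‖φ (s n * X n * s n)‖ := by
          have h := hT1 n k hnk
          have h0 := norm_nonneg (φ (s k * q n))
          have hsq : ‖φ (s k * q n)‖ * ‖φ (s k * q n)‖ ≤ 1 := by nlinarith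
          exact mul_le_mul_of_nonneg_right hsq hXnorm
      _ = ‖φ (s n * X n * s n)‖ := by ring
      _ ≤ KX := hKn n
  obtain ⟨KA, hKA⟩ := main A A' hA
  obtain ⟨KB, hKB⟩ := main B B' hB
  obtain ⟨KC, hKC⟩ := main C C' hC
  refine ⟨max KA (max KB KC), fun n k hnk => ⟨?_, ?_, ?_⟩⟩
  · exact le_trans (hKA n k hnk) (le_max_left _ _)
  · exact le_trans (hKB n k hnk) (le_trans (le_max_left _ _) (le_max_right _ _))
  · exact le_trans (hKC n k hnk) (le_trans (le_max_right _ _) (le_max_right _ _))
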